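/- The exchange relation of coefficient tuples is an involution: let (P,⊕) be a semifield, I a finite index set, B = (B_{ij})_{i,j∈I} an integer matrix, k ∈ I, and y = (y_i)_{i∈I} ∈ P^I. Define y' ∈ P^I by y'_k = y_k^{-1} and, for i ≠ k, y'_i = y_i·(y_k/(1⊕y_k))^{B_{ki}} if B_{ki} ≥ 0 and y'_i = y_i·(1⊕y_k)^{−B_{ki}} if B_{ki} ≤ 0. Let B' = μ_k(B) and define y'' ∈ P^I from the pair (B', y') by the same rule at k, i.e. y''_k = (y'_k)^{-1} and, for i ≠ k, y''_i = y'_i·(y'_k/(1⊕y'_k))^{B'_{ki}} if B'_{ki} ≥ 0 and y''_i = y'_i·(1⊕y'_k)^{−B'_{ki}} if B'_{ki} ≤ 0. Then y'' = y. -/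

import Mathlib

/-- Mutation of an integer matrix at index `k` (the matrix mutation underlying
seed mutation in the theory of cluster algebras with coefficients). -/
def mutateMat {I : Type*} [Fintype I] [DecidableEq I]
    (B : Matrix I I ℤ) (k : I) : Matrix I I ℤ :=
  Matrix.of fun i j =>
    if i = k ∨ j = k then -B i j
    else B i j + (|B i k| * B k j + B i k * |B k j|) / 2

/-- The exchange relation of coefficient tuples is an involution.
Here `(P, op)` is a semifield: `P` is an abelian multiplicative group and `op` (the
auxiliary addition `⊕`) is commutative, associative, and distributive with respect to
the multiplication of `P`. -/
theorem coefficient_mutation_involution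
    {P : Type*} [CommGroup P] (op : P → P → P)
    (hcomm : ∀ a b : P, op a b = op b a)
    (hassoc : ∀ a b c : P, op (op a b) c = op a (op b c))
    (hdistrib : ∀ a b c : P, a * op b c = op (a * b) (a * c))
    {I : Type*} [Fintype I] [DecidableEq I]
    (B : Matrix I I ℤ) (k : I) (y y' y'' : I → P)
    (hy' : ∀ i, y' i =
      if i = k then (y k)⁻¹
      else if 0 ≤ B k i then y i * (y k / op 1 (y k)) ^ (B k i)
      else y i * (op 1 (y k)) ^ (-(B k i)))
    (hy'' : ∀ i, y'' i =
      if i = k then (y' k)⁻¹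
      else if 0 ≤ mutateMat B k k i then y' i * (y' k / op 1 (y' k)) ^ (mutateMat B k k i)
      else y' i * (op 1 (y' k)) ^ (-(mutateMat B k k i))) :
    y'' = y := by
  funext i
  have hyk : y' k = (y k)⁻¹ := by rw [hy' k]; simp
  have hop : op 1 (y' k) = (y k)⁻¹ * op 1 (y k) := by
    rw [hyk, hdistrib, mul_one, inv_mul_cancel, hcomm]
  by_cases hik : i = k
  · subst hik
    rw [hy'' i, if_pos rfl, hyk, inv_inv]
  · have hB' : mutateMat B k k i = - B k i := by
      simp [mutateMat, hik]
    rw [hy'' i, if_neg hik, hB', hy' i, if_neg hik, hop, hyk]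
    by_cases hbk : 0 ≤ B k i
    · rw [if_pos hbk]
      by_cases h2 : 0 ≤ -(B k i)
      · have hz : B k i = 0 := le_antisymm (by linarith) hbk
        simp [hz]
      · rw [if_neg h2, neg_neg, mul_assoc, ← mul_zpow]
        have h1 : y k / op 1 (y k) * ((y k)⁻¹ * op 1 (y k)) = 1 := by
          rw [div_mul_eq_mul_div, mul_inv_cancel_left, div_self']
        rw [h1, one_zpow, mul_one]
    · rw [if_neg hbk, if_pos (by omega : (0:ℤ) ≤ -(B k i))]
      have hq : (y k)⁻¹ / ((y k)⁻¹ * op 1 (y k)) = (op 1 (y k))⁻¹ := by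
        rw [div_eq_mul_inv, mul_inv_rev, inv_inv, mul_comm (op 1 (y k))⁻¹, inv_mul_cancel_left]
      rw [hq, mul_assoc, ← mul_zpow, mul_inv_cancel, one_zpow, mul_one]
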